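/- Let p > q ≥ 1 be coprime integers and suppose p/q = [c_1, …, c_n]^- with integers c_i ≥ 2 for all i. Let q^* be the unique integer with 1 ≤ q^* < p and q·q^* ≡ 1 (mod p). Then p/q^* = [c_n, c_{n−1}, …, c_1]^-. -/

import Mathlib

/-- Negative continued fraction `[c₁, …, cₙ]⁻ = c₁ - 1/[c₂, …, cₙ]⁻` of a
finite sequence of rationals (junk value `0` on the empty list). -/
def negCF : List ℚ → ℚ
  | [] => 0
  | [c] => c
  | c :: d :: t => c - 1 / negCF (d :: t)

namespace Stmt3Aux

def stepM (c : ℤ) (x : ℤ × ℤ) : ℤ × ℤ := (c * x.1 - x.2, x.1)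

def AC (l : List ℤ) : ℤ × ℤ := l.foldr stepM (1, 0)
def BD (l : List ℤ) : ℤ × ℤ := l.foldr stepM (0, 1)

@[simp] lemma AC_nil : AC [] = (1, 0) := rfl
@[simp] lemma BD_nil : BD [] = (0, 1) := rfl
lemma AC_cons (c : ℤ) (t : List ℤ) :
    AC (c :: t) = (c * (AC t).1 - (AC t).2, (AC t).1) := rfl
lemma BD_cons (c : ℤ) (t : List ℤ) :
    BD (c :: t) = (c * (BD t).1 - (BD t).2, (BD t).1) := rfl

lemma det (l : List ℤ) : (AC l).1 * (BD l).2 - (BD l).1 * (AC l).2 = 1 := by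
  induction l with
  | nil => simp
  | cons c t ih => simp only [AC_cons, BD_cons]; ring_nf; ring_nf at ih; linarith

lemma append_singleton (l : List ℤ) (c : ℤ) :
    AC (l ++ [c]) = (c * (AC l).1 + (BD l).1, c * (AC l).2 + (BD l).2) ∧
      BD (l ++ [c]) = (-(AC l).1, -(AC l).2) := by
  induction l with
  | nil => simp [AC, BD, stepM]
  | cons d t ih =>
      obtain ⟨h1, h2⟩ := ih
      constructor <;>
      · simp only [List.cons_append, AC_cons, BD_cons, h1, h2]
        simp only [Prod.mk.injEq]
        constructor <;> grind

lemma rev (l : List ℤ) :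
    AC l.reverse = ((AC l).1, -(BD l).1) ∧ BD l.reverse = (-(AC l).2, (BD l).2) := by
  induction l with
  | nil => simp
  | cons c t ih =>
      obtain ⟨h1, h2⟩ := ih
      have := append_singleton t.reverse c
      obtain ⟨g1, g2⟩ := this
      simp only [List.reverse_cons, g1, g2, h1, h2, AC_cons, BD_cons]
      constructor <;> · simp only [Prod.mk.injEq]; constructor <;> grind

lemma pos (l : List ℤ) (h : ∀ x ∈ l, 2 ≤ x) :
    0 ≤ (AC l).2 ∧ (AC l).2 < (AC l).1 := by
  induction l with
  | nil => simp
  | cons c t ih =>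
      have hc : 2 ≤ c := h c (by simp)
      obtain ⟨h1, h2⟩ := ih (fun x hx => h x (by simp [hx]))
      simp only [AC_cons]
      constructor <;> nlinarith

lemma negCF_eq (l : List ℤ) (hl : l ≠ []) (h : ∀ x ∈ l, 2 ≤ x) :
    negCF (l.map (fun x : ℤ => (x : ℚ))) = ((AC l).1 : ℚ) / ((AC l).2 : ℚ) := by
  induction l with
  | nil => simp at hl
  | cons c t ih =>
      cases t with
      | nil => simp [negCF, AC, stepM]
      | cons d t' =>
          have ht : (d :: t') ≠ [] := by simp
          have h2 : ∀ x ∈ d :: t', 2 ≤ x := fun x hx => h x (by simp [hx])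
          have ihh := ih ht h2
          obtain ⟨p1, p2⟩ := pos (d :: t') h2
          have ha : (1 : ℤ) ≤ (AC (d :: t')).1 := by linarith
          have hp' := pos t' (fun x hx => h2 x (by simp [hx]))
          have ha' : (1 : ℤ) ≤ (AC (d :: t')).2 := by
            simp only [AC_cons]; linarith [hp'.1, hp'.2]
          have haq : ((AC (d :: t')).1 : ℚ) ≠ 0 := by
            exact_mod_cast (by linarith : (AC (d :: t')).1 ≠ 0)
          have haq' : ((AC (d :: t')).2 : ℚ) ≠ 0 := by
            exact_mod_cast (by linarith : (AC (d :: t')).2 ≠ 0)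
          show negCF ((c : ℚ) :: (d : ℚ) :: t'.map (fun x : ℤ => (x : ℚ))) = _
          rw [negCF]
          have : ((d : ℚ) :: t'.map (fun x : ℤ => (x : ℚ))) =
              (d :: t').map (fun x : ℤ => (x : ℚ)) := by simp
          rw [this, ihh, AC_cons c (d :: t')]
          rw [one_div_div]
          push_cast
          field_simp
  
lemma snd_pos (l : List ℤ) (hl : l ≠ []) (h : ∀ x ∈ l, 2 ≤ x) :
    1 ≤ (AC l).2 := by
  cases l with
  | nil => simp at hl
  | cons c t =>
      have := pos t (fun x hx => h x (by simp [hx]))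
      simp only [AC_cons]
      linarith [this.1, this.2]

end Stmt3Aux

/-- If `p > q ≥ 1` are coprime and `p/q = [c₁, …, cₙ]⁻` with all `cᵢ ≥ 2`, and
`q*` is the unique integer with `1 ≤ q* < p` and `q·q* ≡ 1 (mod p)`, then
`p/q* = [cₙ, …, c₁]⁻`. -/
theorem stmt3 (p q qs : ℤ) (hq : 1 ≤ q) (hpq : q < p) (hcop : IsCoprime p q)
    (n : ℕ) (hn : 1 ≤ n) (c : ℕ → ℤ) (hc : ∀ i < n, 2 ≤ c i)
    (hcf : (p : ℚ) / q = negCF ((List.range n).map fun i => (c i : ℚ)))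
    (hqs1 : 1 ≤ qs) (hqsp : qs < p) (hmod : q * qs ≡ 1 [ZMOD p]) :
    (p : ℚ) / qs = negCF (((List.range n).map fun i => (c i : ℚ)).reverse) := by
  open Stmt3Aux in
  set l : List ℤ := (List.range n).map c with hl_def
  have hl_ne : l ≠ [] := by
    simp [hl_def, List.map_eq_nil_iff, List.range_eq_nil]
    omega
  have hmem : ∀ x ∈ l, 2 ≤ x := by
    intro x hx
    simp only [hl_def, List.mem_map, List.mem_range] at hx
    obtain ⟨i, hi, rfl⟩ := hx
    exact hc i hi
  have hmap : ((List.range n).map fun i => (c i : ℚ)) = l.map (fun x : ℤ => (x : ℚ)) := by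
    rw [hl_def, List.map_map]; rfl
  have hmapr : (((List.range n).map fun i => (c i : ℚ)).reverse)
      = (l.reverse).map (fun x : ℤ => (x : ℚ)) := by
    rw [hmap, ← List.map_reverse]
  -- abbreviations
  have hdet := det l
  have hposl := pos l hmem
  have hsnd := snd_pos l hl_ne hmem
  have hrev := rev l
  have hmemr : ∀ x ∈ l.reverse, 2 ≤ x := fun x hx => hmem x (List.mem_reverse.mp hx)
  have hlr_ne : l.reverse ≠ [] := by
    simpa [List.reverse_eq_nil_iff] using hl_ne
  have hposr := pos l.reverse hmemr
  have hsndr := snd_pos l.reverse hlr_ne hmemr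
  rw [hrev.1] at hposr hsndr
  -- identify p = A, q = C
  have hcfl : (p : ℚ) / q = ((AC l).1 : ℚ) / ((AC l).2 : ℚ) := by
    rw [hcf, hmap, negCF_eq l hl_ne hmem]
  have hq0 : (q : ℚ) ≠ 0 := by exact_mod_cast (by omega : q ≠ 0)
  have hC0 : ((AC l).2 : ℚ) ≠ 0 := by exact_mod_cast (by omega : (AC l).2 ≠ 0)
  have hcross : p * (AC l).2 = (AC l).1 * q := by
    have := (div_eq_div_iff hq0 hC0).mp hcfl
    exact_mod_cast this
  have hcopAC : IsCoprime (AC l).1 (AC l).2 :=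
    ⟨(BD l).2, -(BD l).1, by linarith [hdet]⟩
  have hpA : p = (AC l).1 := by
    have h1 : p ∣ (AC l).1 := hcop.dvd_of_dvd_mul_right ⟨(AC l).2, hcross.symm⟩
    have h2 : (AC l).1 ∣ p := hcopAC.dvd_of_dvd_mul_right ⟨q, by linarith [hcross]⟩
    exact Int.dvd_antisymm (by omega) (by linarith [hposl.1, hposl.2]) h2 h1 |>.symm
  have hqC : q = (AC l).2 := by
    have hp0 : p ≠ 0 := by omega
    have := hcross
    rw [hpA] at this
    exact mul_left_cancel₀ (by omega : (AC l).1 ≠ 0) (by linarith)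
  -- identify qs = -B
  have hmodB : p ∣ q * (-(BD l).1) - 1 := by
    refine ⟨-(BD l).2, ?_⟩
    rw [hpA, hqC]
    linarith [hdet]
  have hdvd1 : p ∣ 1 - q * qs := hmod.dvd
  have hdvd2 : p ∣ q * (qs + (BD l).1) := by
    have : q * (qs + (BD l).1) = -((q * (-(BD l).1) - 1)) - (1 - q * qs) := by ring
    rw [this]
    exact dvd_sub (dvd_neg.mpr hmodB) hdvd1
  have hdvd3 : p ∣ qs + (BD l).1 := hcop.dvd_of_dvd_mul_left hdvd2
  have hBlt : -(BD l).1 < p := by rw [hpA]; exact hposr.2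
  have hB1 : 1 ≤ -(BD l).1 := hsndr
  have hqsB : qs + (BD l).1 = 0 := by
    refine Int.eq_zero_of_abs_lt_dvd hdvd3 ?_
    rw [abs_lt]
    omega
  have hqsB' : qs = -(BD l).1 := by omega
  -- conclude
  rw [hmapr, negCF_eq l.reverse hlr_ne hmemr, hrev.1, hpA, hqsB']
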